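/- Let ξ ∈ [0,1] be δ-badly approximable, 0 < δ < 1/2, α ∈ [0,1], β = 1 − α. If a real number η ∈ [0,1] satisfies η ∉ A_α(x) for every x ∈ K_ξ^{(β)}(0,q) and every q, i.e. η ∈ ⋂_q B_q, then the pair (η, ξ) satisfies inf over positive integers p of max{ (p·log(p+1))^α·‖pη‖, (p·log(p+1))^β·‖pξ‖ } ≥ δ, i.e. (η, ξ) ∈ BAD*(α, β; δ). -/

import Mathlib

open Real

/-- Distance from a real number to the nearest integer. -/
noncomputable def nint (t : ℝ) : ℝ := |t - round t|

/-- `l(x,α) = ⌊log(x^{1+α}(log(x+1))^α/(2δ))/log 2⌋`. -/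
noncomputable def lfun (δ α : ℝ) (x : ℕ) : ℤ :=
  ⌊Real.log ((x : ℝ) ^ (1 + α) * (Real.log ((x : ℝ) + 1)) ^ α / (2 * δ)) / Real.log 2⌋

/-- `E_α(x) = ⋃_{y=0}^x (y/x − δ/(x^{1+α}(log(x+1))^α), y/x + δ/(x^{1+α}(log(x+1))^α)) ∩ [0,1]`. -/
noncomputable def Efun (δ α : ℝ) (x : ℕ) : Set ℝ :=
  (⋃ y ∈ Finset.range (x + 1),
    Set.Ioo ((y : ℝ) / (x : ℝ) - δ / ((x : ℝ) ^ (1 + α) * (Real.log ((x : ℝ) + 1)) ^ α))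
            ((y : ℝ) / (x : ℝ) + δ / ((x : ℝ) ^ (1 + α) * (Real.log ((x : ℝ) + 1)) ^ α)))
    ∩ Set.Icc 0 1

/-- `A_α(x)`: the smallest union of level-`l(x,α)` dyadic intervals covering `E_α(x)`. -/
noncomputable def Acov (δ α : ℝ) (x : ℕ) : Set ℝ :=
  ⋃ b : ℤ, ⋃ (_ : (Set.Icc ((b : ℝ) / (2 : ℝ) ^ lfun δ α x) (((b : ℝ) + 1) / (2 : ℝ) ^ lfun δ α x)
      ∩ Efun δ α x).Nonempty),
    Set.Icc ((b : ℝ) / (2 : ℝ) ^ lfun δ α x) (((b : ℝ) + 1) / (2 : ℝ) ^ lfun δ α x)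

/-- `K_ξ^{(β)}(0,q)`. -/
noncomputable def Kset (ξ δ β : ℝ) (q : ℕ) : Set ℕ :=
  {n : ℕ | 0 < n ∧ n ≤ q ∧ nint ((n : ℝ) * ξ) ≤ δ / (((n : ℝ) * Real.log ((n : ℝ) + 1)) ^ β)}

lemma Efun_subset_Acov (δ α : ℝ) (x : ℕ) : Efun δ α x ⊆ Acov δ α x := by
  intro t ht
  have hc : (0:ℝ) < (2:ℝ) ^ lfun δ α x := zpow_pos (by norm_num) _
  set c : ℝ := (2:ℝ) ^ lfun δ α x with hcdef
  refine Set.mem_iUnion.2 ⟨⌊t * c⌋, Set.mem_iUnion.2 ⟨⟨t, ?_, ht⟩, ?_⟩⟩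
  · constructor
    · rw [div_le_iff₀ hc]; exact Int.floor_le _
    · rw [le_div_iff₀ hc]
      have := (Int.lt_floor_add_one (t * c)).le
      push_cast at this ⊢; linarith
  · constructor
    · rw [div_le_iff₀ hc]; exact Int.floor_le _
    · rw [le_div_iff₀ hc]
      have := (Int.lt_floor_add_one (t * c)).le
      push_cast at this ⊢; linarith

theorem stmt19 (ξ δ α β : ℝ) (hδ0 : 0 < δ) (hδ1 : δ < 1/2)
    (hα0 : 0 ≤ α) (hα1 : α ≤ 1) (hβ : β = 1 - α)
    (hξ : ξ ∈ Set.Icc (0 : ℝ) 1)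
    (hbad : ∀ p : ℕ, 0 < p → δ ≤ (p : ℝ) * nint ((p : ℝ) * ξ))
    (η : ℝ) (hη : η ∈ Set.Icc (0 : ℝ) 1)
    (hmem : ∀ q : ℕ, ∀ x ∈ Kset ξ δ β q, η ∉ Acov δ α x) :
    ∀ p : ℕ, 0 < p →
      δ ≤ max (((p : ℝ) * Real.log (p + 1)) ^ α * nint ((p : ℝ) * η))
              (((p : ℝ) * Real.log (p + 1)) ^ β * nint ((p : ℝ) * ξ)) := by
  intro p hp
  have hP : (0:ℝ) < p := Nat.cast_pos.mpr hp
  have hP1 : (1:ℝ) ≤ p := Nat.one_le_cast.mpr hp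
  have hL : 0 < Real.log ((p:ℝ) + 1) := Real.log_pos (by linarith)
  set L := Real.log ((p:ℝ) + 1) with hLdef
  have hPL : (0:ℝ) < (p:ℝ) * L := mul_pos hP hL
  by_cases hK : p ∈ Kset ξ δ β p
  · -- η ∉ Acov δ α p, hence η ∉ Efun δ α p
    have hnA := hmem p p hK
    have hnE : η ∉ Efun δ α p := fun h => hnA (Efun_subset_Acov δ α p h)
    set r : ℝ := δ / ((p : ℝ) ^ (1 + α) * L ^ α) with hrdef
    set m : ℤ := round ((p:ℝ) * η) with hmdef
    have hη0 : (0:ℝ) ≤ (p:ℝ) * η := mul_nonneg hP.le hη.1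
    have hm0 : 0 ≤ m := by
      rw [hmdef, round_eq]
      exact Int.floor_nonneg.2 (by linarith)
    have hmp : m ≤ (p:ℤ) := by
      have : round ((p:ℝ) * η) ≤ round ((p:ℝ) * 1) := by
        rw [round_eq, round_eq]
        exact Int.floor_mono (by nlinarith [hη.2])
      simpa [hmdef] using this.trans_eq (by rw [mul_one]; exact_mod_cast round_natCast p)
    set y : ℕ := m.toNat with hydef
    have hym : ((y:ℕ):ℝ) = (m:ℝ) := by
      rw [hydef]; exact_mod_cast congrArg Int.cast (Int.toNat_of_nonneg hm0)
    have hymem : y ∈ Finset.range (p + 1) := by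
      rw [Finset.mem_range, hydef]
      omega
    have hnotIoo : η ∉ Set.Ioo ((y:ℝ)/(p:ℝ) - r) ((y:ℝ)/(p:ℝ) + r) := by
      intro hIoo
      exact hnE ⟨Set.mem_biUnion hymem hIoo, hη⟩
    -- so |η - y/p| ≥ r
    have hr0 : 0 < r := by
      rw [hrdef]
      positivity
    have habs : r ≤ |η - (y:ℝ)/(p:ℝ)| := by
      rcases not_and_or.mp (fun h => hnotIoo ⟨h.1, h.2⟩) with h | h
      · push_neg at h
        rw [abs_sub_comm, abs_of_nonneg (by linarith)]; linarith
      · push_neg at h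
        rw [abs_of_nonneg (by linarith)]; linarith
    have hnint : (p:ℝ) * r ≤ nint ((p:ℝ) * η) := by
      have : (p:ℝ) * r ≤ |(p:ℝ) * η - (m:ℝ)| := by
        have := mul_le_mul_of_nonneg_left habs hP.le
        calc (p:ℝ) * r ≤ (p:ℝ) * |η - (y:ℝ)/(p:ℝ)| := this
          _ = |(p:ℝ) * η - (m:ℝ)| := by
              have he : (p:ℝ) * η - (m:ℝ) = (p:ℝ) * (η - (y:ℝ)/(p:ℝ)) := by
                rw [hym]
                field_simp
              rw [he, abs_mul, abs_of_pos hP]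
      simpa [nint, hmdef] using this
    have hpa : (0:ℝ) < (p:ℝ) ^ α := Real.rpow_pos_of_pos hP α
    have hLa : (0:ℝ) < L ^ α := Real.rpow_pos_of_pos hL α
    have hpr : (p:ℝ) * r = δ / ((p:ℝ) ^ α * L ^ α) := by
      rw [hrdef, Real.rpow_add hP 1 α, Real.rpow_one]
      field_simp
    have hsplit : ((p:ℝ) * L) ^ α = (p:ℝ) ^ α * L ^ α :=
      Real.mul_rpow hP.le hL.le
    refine le_max_of_le_left ?_
    calc δ = ((p:ℝ) ^ α * L ^ α) * (δ / ((p:ℝ) ^ α * L ^ α)) := by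
            field_simp
      _ ≤ ((p:ℝ) ^ α * L ^ α) * nint ((p:ℝ) * η) := by
            refine mul_le_mul_of_nonneg_left ?_ (by positivity)
            rw [← hpr]; exact hnint
      _ = ((p:ℝ) * L) ^ α * nint ((p:ℝ) * η) := by rw [hsplit]
  · -- p ∉ Kset: ξ part is large
    have : ¬ nint ((p:ℝ) * ξ) ≤ δ / (((p:ℝ) * L) ^ β) := by
      intro h
      exact hK ⟨hp, le_refl p, h⟩
    push_neg at this
    have hPLb : (0:ℝ) < ((p:ℝ) * L) ^ β := Real.rpow_pos_of_pos hPL β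
    refine le_max_of_le_right ?_
    rw [← div_le_iff₀' hPLb]
    exact this.le
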